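/- Let Σ be a finite set with a distinguished element q, and let δ : Σ → ℂ^Σ be a function. Define the global operator on finitely supported configurations c : ℤ → Σ (with c_i = q for all but finitely many i) by U(d, c) = ∏_{i∈ℤ} δ(c_i)(d_i) (a well-defined product since all but finitely many factors equal δ(q)(q) or vanish), assuming δ(q)(x) = 1 if x = q and 0 otherwise. Then U preserves the ℓ² norm on superpositions of configurations if and only if ‖δ(x)‖ = 1 for all x ∈ Σ and ⟨δ(x), δ(y)⟩ = 0 for all x ≠ y in Σ. -/

import Mathlib

open Complex Finset

section AuxLQCA
set_option linter.unusedSectionVars false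
variable {S : Type*} [Fintype S] [DecidableEq S] (q : S) (δ : S → EuclideanSpace ℂ S)


noncomputable def cfgOf (A : Finset ℤ) (g : {i // i ∈ A} → S) :
    {c : ℤ → S // {i | c i ≠ q}.Finite} :=
  ⟨fun i => if h : i ∈ A then g ⟨i, h⟩ else q, by
    apply A.finite_toSet.subset
    intro i hi
    by_contra h
    exact hi (dif_neg h)⟩

lemma cfgOf_inj (A : Finset ℤ) : Function.Injective (cfgOf q (A := A)) := by
  intro g g' h
  funext i
  have := congrFun (congrArg Subtype.val h) i.1
  simpa [cfgOf, dif_pos i.2] using this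

lemma finprod_eq (hq : ∀ x, δ q x = if x = q then 1 else 0)
    (c d : {c : ℤ → S // {i | c i ≠ q}.Finite}) {A : Finset ℤ}
    (hc : {i | c.1 i ≠ q} ⊆ ↑A) (hd : {i | d.1 i ≠ q} ⊆ ↑A) :
    ∏ᶠ i : ℤ, δ (c.1 i) (d.1 i) = ∏ i ∈ A, δ (c.1 i) (d.1 i) := by
  apply finprod_eq_prod_of_mulSupport_subset
  intro i hi
  by_contra hiA
  have hc' : c.1 i = q := by by_contra h; exact hiA (hc h)
  have hd' : d.1 i = q := by by_contra h; exact hiA (hd h)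
  rw [Function.mem_mulSupport, hc', hq, hd', if_pos rfl] at hi
  exact hi rfl

lemma ofReal_norm_sq (z : ℂ) : ((‖z‖ ^ 2 : ℝ) : ℂ) = z * (starRingEnd ℂ) z := by
  rw [Complex.mul_conj, Complex.normSq_eq_norm_sq]

lemma master (hq : ∀ x, δ q x = if x = q then 1 else 0)
    (f : {c : ℤ → S // {i | c i ≠ q}.Finite} →₀ ℂ) (A : Finset ℤ)
    (hA : ∀ c ∈ f.support, {i | c.1 i ≠ q} ⊆ ↑A) :
    ((∑' d : {c : ℤ → S // {i | c i ≠ q}.Finite},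
        ‖∑ c ∈ f.support, f c * ∏ᶠ i : ℤ, δ (c.1 i) (d.1 i)‖ ^ 2 : ℝ) : ℂ)
      = ∑ c ∈ f.support, ∑ c' ∈ f.support,
          (f c * (starRingEnd ℂ) (f c')) *
            ∏ i ∈ A, (inner ℂ (δ (c'.1 i)) (δ (c.1 i)) : ℂ) := by
  classical
  set D : Finset {c : ℤ → S // {i | c i ≠ q}.Finite} :=
    Finset.image (cfgOf q A) Finset.univ with hD
  have memD : ∀ d : {c : ℤ → S // {i | c i ≠ q}.Finite},
      d ∈ D ↔ {i | d.1 i ≠ q} ⊆ ↑A := by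
    intro d
    constructor
    · rintro hd
      obtain ⟨g, -, rfl⟩ := Finset.mem_image.1 hd
      intro i hi
      by_contra h
      exact hi (dif_neg h)
    · intro h
      refine Finset.mem_image.2 ⟨fun i => d.1 i.1, Finset.mem_univ _, ?_⟩
      apply Subtype.ext
      funext i
      show (if h : i ∈ A then d.1 i else q) = d.1 i
      by_cases hi : i ∈ A
      · rw [dif_pos hi]
      · have : d.1 i = q := by by_contra hne; exact hi (h hne)
        rw [dif_neg hi, this]
  -- step 1: tsum is a finite sum over D
  have h0 : ∀ d ∉ D,
      (‖∑ c ∈ f.support, f c * ∏ᶠ i : ℤ, δ (c.1 i) (d.1 i)‖ ^ 2 : ℝ) = 0 := by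
    intro d hd
    have : ∃ i, d.1 i ≠ q ∧ i ∉ A := by
      by_contra h
      push_neg at h
      exact hd ((memD d).2 fun i hi => h i hi)
    obtain ⟨i₀, hi₀q, hi₀A⟩ := this
    have hz : ∀ c ∈ f.support, f c * ∏ᶠ i : ℤ, δ (c.1 i) (d.1 i) = 0 := by
      intro c hc
      set B : Finset ℤ := A ∪ d.2.toFinset with hB
      have hcB : {i | c.1 i ≠ q} ⊆ ↑B := fun i hi =>
        Finset.mem_coe.2 (Finset.mem_union_left _ (hA c hc hi))
      have hdB : {i | d.1 i ≠ q} ⊆ ↑B := fun i hi =>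
        Finset.mem_coe.2 (Finset.mem_union_right _ (d.2.mem_toFinset.2 hi))
      rw [finprod_eq q δ hq c d hcB hdB]
      have hi₀B : i₀ ∈ B := Finset.mem_union_right _ (d.2.mem_toFinset.2 hi₀q)
      have hc₀ : c.1 i₀ = q := by
        by_contra h; exact hi₀A (hA c hc h)
      rw [Finset.prod_eq_zero hi₀B, mul_zero]
      rw [hc₀, hq, if_neg hi₀q]
    rw [Finset.sum_eq_zero hz]
    simp
  rw [tsum_eq_sum h0, Complex.ofReal_sum]
  -- step 2: replace finprod by finite product and expand the square
  have step2 : ∀ d ∈ D,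
      ((‖∑ c ∈ f.support, f c * ∏ᶠ i : ℤ, δ (c.1 i) (d.1 i)‖ ^ 2 : ℝ) : ℂ)
        = ∑ c ∈ f.support, ∑ c' ∈ f.support,
            (f c * (starRingEnd ℂ) (f c')) *
              ∏ i ∈ A, (δ (c.1 i) (d.1 i) * (starRingEnd ℂ) (δ (c'.1 i) (d.1 i))) := by
    intro d hd
    have hdA := (memD d).1 hd
    have hrw : ∀ c ∈ f.support,
        f c * ∏ᶠ i : ℤ, δ (c.1 i) (d.1 i) = f c * ∏ i ∈ A, δ (c.1 i) (d.1 i) := by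
      intro c hc
      rw [finprod_eq q δ hq c d (hA c hc) hdA]
    rw [Finset.sum_congr rfl hrw]
    rw [ofReal_norm_sq]
    rw [map_sum, Finset.sum_mul_sum]
    refine Finset.sum_congr rfl fun c _ => Finset.sum_congr rfl fun c' _ => ?_
    rw [map_mul, map_prod, Finset.prod_mul_distrib]
    ring
  rw [Finset.sum_congr rfl step2]
  -- step 3: swap summation order and compute inner sums
  rw [Finset.sum_comm]
  refine Finset.sum_congr rfl fun c hc => ?_
  rw [Finset.sum_comm]
  refine Finset.sum_congr rfl fun c' hc' => ?_
  rw [← Finset.mul_sum]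
  congr 1
  -- ∑ d ∈ D, ∏ i ∈ A, ... = ∏ i ∈ A, inner ...
  rw [hD, Finset.sum_image (fun g _ g' _ h => cfgOf_inj q A h)]
  have key : ∀ g : {i // i ∈ A} → S,
      ∏ i ∈ A, (δ (c.1 i) ((cfgOf q A g).1 i) * (starRingEnd ℂ) (δ (c'.1 i) ((cfgOf q A g).1 i)))
        = ∏ i : {i // i ∈ A}, (δ (c.1 i.1) (g i) * (starRingEnd ℂ) (δ (c'.1 i.1) (g i))) := by
    intro g
    rw [← Finset.prod_coe_sort A]
    refine Finset.prod_congr rfl fun i _ => ?_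
    have : (cfgOf q A g).1 i.1 = g i := by
      show (if h : i.1 ∈ A then g ⟨i.1, h⟩ else q) = g i
      rw [dif_pos i.2]
    rw [this]
  rw [Finset.sum_congr rfl fun g _ => key g]
  rw [← Fintype.piFinset_univ,
    ← Finset.prod_univ_sum (fun _ : {i // i ∈ A} => (Finset.univ : Finset S))
      (fun i s => δ (c.1 i.1) s * (starRingEnd ℂ) (δ (c'.1 i.1) s))]
  rw [← Finset.prod_coe_sort A]
  refine Finset.prod_congr rfl fun i _ => ?_
  rw [PiLp.inner_apply]
  refine Finset.sum_congr rfl fun s _ => ?_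
  simp [RCLike.inner_apply, mul_comm]



def cfg0 (q x : S) : {c : ℤ → S // {i | c i ≠ q}.Finite} :=
  ⟨fun i => if i = 0 then x else q, by
    apply (Set.finite_singleton (0 : ℤ)).subset
    intro i hi
    simp only [Set.mem_setOf_eq] at hi
    simp only [Set.mem_singleton_iff]
    by_contra h
    rw [if_neg h] at hi
    exact hi rfl⟩

lemma cfg0_subset (q x : S) : {i | (cfg0 q x).1 i ≠ q} ⊆ ↑({0} : Finset ℤ) := by
  intro i hi
  simp only [cfg0, Set.mem_setOf_eq] at hi
  simp only [Finset.coe_singleton, Set.mem_singleton_iff]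
  by_contra h
  rw [if_neg h] at hi
  exact hi rfl

lemma cfg0_zero (q x : S) : (cfg0 q x).1 0 = x := by simp [cfg0]

end AuxLQCA

/-- For a trivial LQCA (neighborhood `N = (0)`), the global evolution operator
`U(d,c) = ∏_{i∈ℤ} δ(c_i)(d_i)` preserves the `ℓ²` norm of (finitely supported)
superpositions of configurations iff every `δ(x)` has unit norm and
`δ(x) ⊥ δ(y)` whenever `x ≠ y`. -/
theorem trivial_lqca_well_formed_iff {S : Type*} [Fintype S] [DecidableEq S] (q : S)
    (δ : S → EuclideanSpace ℂ S)
    (hq : ∀ x, δ q x = if x = q then 1 else 0) :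
    (∀ f : {c : ℤ → S // {i | c i ≠ q}.Finite} →₀ ℂ,
        (∑' d : {c : ℤ → S // {i | c i ≠ q}.Finite},
            ‖∑ c ∈ f.support, f c * ∏ᶠ i : ℤ, δ (c.1 i) (d.1 i)‖ ^ 2)
          = ∑ c ∈ f.support, ‖f c‖ ^ 2)
      ↔ ((∀ x, ‖δ x‖ = 1) ∧ ∀ x y, x ≠ y → inner (𝕜 := ℂ) (δ x) (δ y) = 0) := by
  classical
  constructor
  · intro H
    have hx : ∀ x, ‖δ x‖ = 1 := by
      intro x
      have hf := master q δ hq (Finsupp.single (cfg0 q x) 1) {0}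
        (by
          intro c hc
          rw [Finsupp.support_single_ne_zero _ one_ne_zero, Finset.mem_singleton] at hc
          subst hc
          exact cfg0_subset q x)
      rw [H _, Finsupp.support_single_ne_zero _ one_ne_zero] at hf
      simp only [Finset.sum_singleton, Finsupp.single_eq_same, Finset.prod_singleton,
        cfg0_zero, norm_one, one_pow, map_one, mul_one, one_mul, Complex.ofReal_one] at hf
      rw [inner_self_eq_norm_sq_to_K] at hf
      have hf' : ‖δ x‖ ^ 2 = 1 := by
        have h3 := congrArg Complex.re hf
        simpa [← Complex.ofReal_pow] using h3.symm
      nlinarith [norm_nonneg (δ x)]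
    refine ⟨hx, fun x y hxy => ?_⟩
    set w : ℂ := inner ℂ (δ x) (δ y) with hw
    have hne : cfg0 q x ≠ cfg0 q y := by
      intro h
      exact hxy (by simpa [cfg0_zero] using congrFun (congrArg Subtype.val h) 0)
    have key : ∀ z : ℂ, z ≠ 0 →
        (starRingEnd ℂ) z * (starRingEnd ℂ) w + z * w = 0 := by
      intro z hz
      set f : {c : ℤ → S // {i | c i ≠ q}.Finite} →₀ ℂ :=
        Finsupp.single (cfg0 q x) 1 + Finsupp.single (cfg0 q y) z with hfdef
      have hsupp : f.support = {cfg0 q x, cfg0 q y} := by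
        rw [hfdef, Finsupp.support_add_eq]
        · rw [Finsupp.support_single_ne_zero _ one_ne_zero,
            Finsupp.support_single_ne_zero _ hz]
          ext a
          simp [Finset.mem_union]
        · rw [Finsupp.support_single_ne_zero _ one_ne_zero,
            Finsupp.support_single_ne_zero _ hz, Finset.disjoint_singleton]
          exact hne
      have fc1 : f (cfg0 q x) = 1 := by
        simp [hfdef, Finsupp.single_apply, hne, Ne.symm hne]
      have fc2 : f (cfg0 q y) = z := by
        simp [hfdef, Finsupp.single_apply, hne, Ne.symm hne]
      have hf := master q δ hq f {0}
        (by
          intro c hc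
          rw [hsupp, Finset.mem_insert, Finset.mem_singleton] at hc
          rcases hc with rfl | rfl
          · exact cfg0_subset q x
          · exact cfg0_subset q y)
      rw [H _, hsupp, Finset.sum_pair hne, Finset.sum_pair hne, Finset.sum_pair hne,
        Finset.sum_pair hne] at hf
      simp only [fc1, fc2, Finset.prod_singleton, cfg0_zero, map_one, mul_one, one_mul] at hf
      have hxx : (inner ℂ (δ x) (δ x) : ℂ) = 1 := by
        rw [inner_self_eq_norm_sq_to_K, hx x]
        simp
      have hyy : (inner ℂ (δ y) (δ y) : ℂ) = 1 := by
        rw [inner_self_eq_norm_sq_to_K, hx y]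
        simp
      have hyx : (inner ℂ (δ y) (δ x) : ℂ) = (starRingEnd ℂ) w := by
        rw [hw, inner_conj_symm]
      rw [hxx, hyy, hyx, ← hw] at hf
      simp only [Complex.conj_conj, norm_one] at hf
      have hzz := ofReal_norm_sq z
      push_cast at hzz hf
      linear_combination hzz - hf
    have k1 := key 1 one_ne_zero
    have k2 := key Complex.I Complex.I_ne_zero
    simp only [map_one, one_mul, Complex.conj_I] at k1 k2
    have hw0 : w = 0 := by
      linear_combination k1 / 2 - (Complex.I / 2) * k2
        + ((w - (starRingEnd ℂ) w) / 2) * Complex.I_mul_I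
    exact hw0
  · rintro ⟨hx, horth⟩ f
    set A : Finset ℤ := f.support.sup (fun c => c.2.toFinset) with hAdef
    have hA : ∀ c ∈ f.support, {i | c.1 i ≠ q} ⊆ ↑A := by
      intro c hc i hi
      have hsub : c.2.toFinset ⊆ A :=
        Finset.le_sup (f := fun c : {c : ℤ → S // {i | c i ≠ q}.Finite} => c.2.toFinset) hc
      exact Finset.mem_coe.2 (hsub (c.2.mem_toFinset.2 hi))
    have hf := master q δ hq f A hA
    have hprod : ∀ c ∈ f.support, ∀ c' ∈ f.support,
        (∏ i ∈ A, (inner ℂ (δ (c'.1 i)) (δ (c.1 i)) : ℂ)) = if c = c' then 1 else 0 := by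
      intro c hc c' hc'
      by_cases h : c = c'
      · subst h
        rw [if_pos rfl]
        apply Finset.prod_eq_one
        intro i _
        rw [inner_self_eq_norm_sq_to_K, hx]
        simp
      · rw [if_neg h]
        have : ∃ i, c.1 i ≠ c'.1 i := by
          by_contra hcc
          push_neg at hcc
          exact h (Subtype.ext (funext hcc))
        obtain ⟨i, hi⟩ := this
        have hiA : i ∈ A := by
          by_cases hcq : c.1 i ≠ q
          · exact Finset.mem_coe.1 (hA c hc hcq)
          · push_neg at hcq
            have : c'.1 i ≠ q := fun h' => hi (hcq.trans h'.symm)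
            exact Finset.mem_coe.1 (hA c' hc' this)
        exact Finset.prod_eq_zero hiA (horth _ _ (Ne.symm hi))
    have hsum : ∀ c ∈ f.support, (∑ c' ∈ f.support,
        (f c * (starRingEnd ℂ) (f c')) * ∏ i ∈ A, (inner ℂ (δ (c'.1 i)) (δ (c.1 i)) : ℂ))
        = ((‖f c‖ ^ 2 : ℝ) : ℂ) := by
      intro c hc
      rw [Finset.sum_congr rfl (fun c' hc' => by rw [hprod c hc c' hc'])]
      simp only [mul_ite, mul_one, mul_zero]
      rw [Finset.sum_ite_eq f.support c (fun c' => f c * (starRingEnd ℂ) (f c')), if_pos hc]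
      rw [ofReal_norm_sq]
    rw [Finset.sum_congr rfl hsum, ← Complex.ofReal_sum] at hf
    exact_mod_cast hf
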